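/- Let u : ℝ → ℝ be twice continuously differentiable on a neighborhood of x₀. Then the asymmetric coarse–fine interface difference quotient (1/h)·((u(x₀ + h) − u(x₀))/h − (u(x₀) − u(x₀ − 3h/2))/(3h/2)) tends to (5/4)·u''(x₀) as h → 0⁺. In particular, the discretization is inconsistent with u''(x₀) (its limit is (5/4)·u''(x₀), not u''(x₀)). -/

import Mathlib

open Filter Asymptotics Set

lemma taylor2_littleo (u : ℝ → ℝ) (x₀ : ℝ) (hu : ContDiffAt ℝ 2 u x₀) :
    (fun h : ℝ => u (x₀ + h) - u x₀ - deriv u x₀ * h - deriv (deriv u) x₀ * h ^ 2 / 2)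
      =o[nhds 0] fun h : ℝ => h ^ 2 := by
  obtain ⟨t, ht, hcd⟩ := hu.contDiffOn le_rfl (by simp)
  obtain ⟨s, hst, hs_open, hx₀s⟩ := mem_nhds_iff.mp ht
  have hcds : ContDiffOn ℝ 2 u s := hcd.mono hst
  have h2 : (2 : WithTop ℕ∞) = 1 + 1 := by norm_num
  have hsucc := (contDiffOn_succ_iff_deriv_of_isOpen hs_open).mp (h2 ▸ hcds)
  have hdu : DifferentiableOn ℝ u s := hsucc.1
  have hg1 : ContDiffOn ℝ 1 (deriv u) s := hsucc.2.2
  set b := deriv u x₀ with hb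
  set c := deriv (deriv u) x₀ with hc
  have hgx : HasDerivAt (deriv u) c x₀ := by
    have : DifferentiableAt ℝ (deriv u) x₀ :=
      ((hg1 x₀ hx₀s).contDiffAt (hs_open.mem_nhds hx₀s)).differentiableAt one_ne_zero
    exact this.hasDerivAt
  have hO : (fun t : ℝ => deriv u (x₀ + t) - b - c * t) =o[nhds 0] fun t : ℝ => t := by
    have h1 := hgx.isLittleO
    have htend : Tendsto (fun t : ℝ => x₀ + t) (nhds 0) (nhds x₀) := by
      have : Continuous fun t : ℝ => x₀ + t := by continuity
      simpa using this.tendsto' 0 x₀ (by simp)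
    have := h1.comp_tendsto htend
    simp only [Function.comp_def] at this
    have h2' : (fun t : ℝ => u (x₀ + t)) = fun t : ℝ => u (x₀ + t) := rfl
    -- this : (fun t => deriv u (x₀ + t) - deriv u x₀ - (x₀ + t - x₀) • c) =o[𝓝 0] fun t => x₀ + t - x₀
    refine (this.congr' ?_ ?_ : _)
    · filter_upwards with t; simp [smul_eq_mul]; ring
    · filter_upwards with t; simp
  rw [Asymptotics.isLittleO_iff]
  intro ε hε
  have hmem : ∀ᶠ t : ℝ in nhds 0, x₀ + t ∈ s := by
    have : Tendsto (fun t : ℝ => x₀ + t) (nhds 0) (nhds x₀) := by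
      have : Continuous fun t : ℝ => x₀ + t := by continuity
      simpa using this.tendsto' 0 x₀ (by simp)
    exact this.eventually (hs_open.eventually_mem hx₀s)
  have hbound : ∀ᶠ t : ℝ in nhds 0, ‖deriv u (x₀ + t) - b - c * t‖ ≤ ε * ‖t‖ :=
    hO.bound hε
  obtain ⟨δ, hδ, Hδ⟩ := Metric.eventually_nhds_iff.mp (hbound.and hmem)
  have key : ∀ h : ℝ, |h| < δ →
      ‖u (x₀ + h) - u x₀ - b * h - c * h ^ 2 / 2‖ ≤ ε * ‖h ^ 2‖ := by
    intro h hh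
    set φ : ℝ → ℝ := fun t => u (x₀ + t) - u x₀ - b * t - c * t ^ 2 / 2 with hφ
    have habs : ∀ t ∈ uIcc (0:ℝ) h, |t| ≤ |h| := by
      intro t ht'
      rcases Set.mem_uIcc.mp ht' with ⟨h1, h2⟩ | ⟨h1, h2⟩ <;>
        · rw [abs_le]
          constructor <;> [skip; skip] <;>
            nlinarith [le_abs_self h, neg_abs_le h]
    have hderiv : ∀ t ∈ uIcc (0:ℝ) h,
        HasDerivWithinAt φ (deriv u (x₀ + t) - b - c * t) (uIcc (0:ℝ) h) t := by
      intro t ht'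
      have htlt : |t| < δ := lt_of_le_of_lt (habs t ht') hh
      have hts : x₀ + t ∈ s := (Hδ (by simpa [Real.dist_eq] using htlt)).2
      have h1 : HasDerivAt (fun t : ℝ => u (x₀ + t)) (deriv u (x₀ + t)) t := by
        have hd : HasDerivAt u (deriv u (x₀ + t)) (x₀ + t) :=
          ((hdu.differentiableAt (hs_open.mem_nhds hts))).hasDerivAt
        simpa [Function.comp_def] using HasDerivAt.scomp t (by simpa using hd) ((hasDerivAt_id t).const_add x₀)
      have h2' : HasDerivAt (fun t : ℝ => u x₀ + b * t + c * t ^ 2 / 2)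
          (b + c * t) t := by
        have hp : HasDerivAt (fun t : ℝ => c * t ^ 2 / 2) (c * t) t := by
          have := ((hasDerivAt_pow 2 t).const_mul c).div_const 2
          refine this.congr_deriv ?_
          norm_num; ring
        have hl : HasDerivAt (fun t : ℝ => u x₀ + b * t) b t := by
          simpa using ((hasDerivAt_id t).const_mul b).const_add (u x₀)
        exact hl.add hp
      have := h1.sub h2'
      have heq : ((fun t : ℝ => u (x₀ + t)) - fun t : ℝ => u x₀ + b * t + c * t ^ 2 / 2) = φ := by
        funext t; simp [hφ]; ring
      rw [heq] at this
      have : HasDerivAt φ (deriv u (x₀ + t) - b - c * t) t := by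
        exact this.congr_deriv (by ring)
      exact this.hasDerivWithinAt
    have hboundC : ∀ t ∈ uIcc (0:ℝ) h,
        ‖deriv u (x₀ + t) - b - c * t‖ ≤ ε * |h| := by
      intro t ht'
      have htlt : |t| < δ := lt_of_le_of_lt (habs t ht') hh
      have := (Hδ (y := t) (by simpa [Real.dist_eq] using htlt)).1
      calc ‖deriv u (x₀ + t) - b - c * t‖ ≤ ε * ‖t‖ := this
        _ ≤ ε * |h| := by
            have := habs t ht'
            have : ‖t‖ ≤ |h| := by simpa using this
            nlinarith [hε.le]
    have := (convex_uIcc (0:ℝ) h).norm_image_sub_le_of_norm_hasDerivWithin_le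
      hderiv hboundC (Set.left_mem_uIcc) (Set.right_mem_uIcc)
    have hφ0 : φ 0 = 0 := by simp [hφ]
    rw [hφ0, sub_zero, sub_zero] at this
    calc ‖φ h‖ ≤ ε * |h| * ‖h‖ := this
      _ = ε * ‖h ^ 2‖ := by
          simp [Real.norm_eq_abs, abs_of_nonneg (sq_nonneg h), sq, abs_mul]
          rw [mul_assoc, ← abs_mul, abs_mul_self]
  filter_upwards [Metric.ball_mem_nhds (0:ℝ) hδ] with h hh
  exact key h (by simpa [Real.dist_eq] using hh)


/-- The asymmetric coarse–fine AMR interface difference quotient tends to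
`(5/4)·u''(x₀)` as `h → 0⁺`; in particular it is inconsistent with `u''(x₀)`
whenever `u''(x₀) ≠ 0`. -/
theorem stmt_13
    (u : ℝ → ℝ) (x₀ : ℝ)
    (hu : ContDiffAt ℝ 2 u x₀) :
    Tendsto
      (fun h : ℝ =>
        (1 / h) * ((u (x₀ + h) - u x₀) / h - (u x₀ - u (x₀ - 3 * h / 2)) / (3 * h / 2)))
      (nhdsWithin 0 (Set.Ioi 0))
      (nhds ((5 / 4) * deriv (deriv u) x₀)) ∧
    (deriv (deriv u) x₀ ≠ 0 →
      (5 / 4) * deriv (deriv u) x₀ ≠ deriv (deriv u) x₀) := by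
  constructor
  · set b := deriv u x₀ with hb
    set c := deriv (deriv u) x₀ with hc
    set φ : ℝ → ℝ := fun h => u (x₀ + h) - u x₀ - b * h - c * h ^ 2 / 2 with hφdef
    have hφ : φ =o[nhds 0] fun h : ℝ => h ^ 2 := taylor2_littleo u x₀ hu
    have htend : Tendsto (fun h : ℝ => -(3 * h / 2)) (nhds 0) (nhds 0) := by
      have : Continuous fun h : ℝ => -(3 * h / 2) := by continuity
      simpa using this.tendsto' 0 0 (by norm_num)
    have hBig : (fun h : ℝ => (-(3 * h / 2)) ^ 2) =O[nhds 0] fun h : ℝ => h ^ 2 := by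
      rw [Asymptotics.isBigO_iff]
      refine ⟨9 / 4, ?_⟩
      filter_upwards with h
      rw [Real.norm_eq_abs, Real.norm_eq_abs, abs_of_nonneg (sq_nonneg _),
        abs_of_nonneg (sq_nonneg _)]
      nlinarith
    have hφ2 : (fun h : ℝ => φ (-(3 * h / 2))) =o[nhds 0] fun h : ℝ => h ^ 2 :=
      (hφ.comp_tendsto htend).trans_isBigO hBig
    have T1 : Tendsto (fun h : ℝ => φ h / h ^ 2) (nhds 0) (nhds 0) :=
      hφ.tendsto_div_nhds_zero
    have T2 : Tendsto (fun h : ℝ => φ (-(3 * h / 2)) / h ^ 2) (nhds 0) (nhds 0) :=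
      hφ2.tendsto_div_nhds_zero
    have Tall : Tendsto
        (fun h : ℝ => 5 / 4 * c + (φ h / h ^ 2 + 2 / 3 * (φ (-(3 * h / 2)) / h ^ 2)))
        (nhds 0) (nhds (5 / 4 * c)) := by
      have := tendsto_const_nhds (x := (5:ℝ)/4*c) (f := nhds (0:ℝ)) |>.add
        (T1.add (T2.const_mul (2/3)))
      simpa using this
    have Tall' : Tendsto (fun h : ℝ => 5 / 4 * c + (φ h / h ^ 2 + 2 / 3 * (φ (-(3 * h / 2)) / h ^ 2))) (nhdsWithin 0 (Set.Ioi 0)) (nhds (5 / 4 * c)) := Tall.mono_left nhdsWithin_le_nhds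
    apply Tall'.congr'
    filter_upwards [self_mem_nhdsWithin] with h hh
    have h0 : (h : ℝ) ≠ 0 := ne_of_gt hh
    simp only [hφdef]
    rw [show x₀ + -(3 * h / 2) = x₀ - 3 * h / 2 by ring]
    field_simp
    ring
  · intro hcne heq
    apply hcne
    linarith
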